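/- Let M be a maximal ideal of a domain D and R a ring of functions from E to D. Assume that either D/M is not algebraically closed or each function in R takes values in only finitely many residue classes mod M. Then every ideal Q of R that is maximal with respect to not containing any M-unit-valued function is of the form M_U for some ultrafilter U on E. -/

import Mathlib

set_option synthInstance.maxHeartbeats 1000000 in
set_option maxHeartbeats 2000000 in
theorem stmt11 {D : Type*} [CommRing D] [IsDomain D] {E : Set D}
    (R : Subring (↥E → D)) (hconst : ∀ d : D, (fun _ : ↥E => d) ∈ R)
    (M : Ideal D) [hM : M.IsMaximal]
    (hyp : (¬ @IsAlgClosed (D ⧸ M) (Ideal.Quotient.field M)) ∨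
      ∀ f : R,
        (Set.range fun e : ↥E => Ideal.Quotient.mk M ((f : ↥E → D) e)).Finite)
    (Q : Ideal R)
    (hQ : ¬ ∃ f ∈ Q, ∀ e : ↥E, (f : ↥E → D) e ∉ M)
    (hQmax : ∀ Q' : Ideal R, Q ≤ Q' →
      (¬ ∃ f ∈ Q', ∀ e : ↥E, (f : ↥E → D) e ∉ M) → Q' = Q) :
    ∃ U : Ultrafilter ↥E, ∀ f : R, f ∈ Q ↔ {e : ↥E | (f : ↥E → D) e ∈ M} ∈ U := by
  classical
  letI : Field (D ⧸ M) := Ideal.Quotient.field M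
  let C : D → R := fun d => ⟨fun _ => d, hconst d⟩
  let φ : ↥E → (R →+* D ⧸ M) := fun e =>
    (Ideal.Quotient.mk M).comp ((Pi.evalRingHom (fun _ : ↥E => D) e).comp R.subtype)
  have hφ : ∀ (e : ↥E) (f : R), φ e f = Ideal.Quotient.mk M ((f : ↥E → D) e) :=
    fun _ _ => rfl
  have hφC : ∀ (e : ↥E) (d : D), φ e (C d) = Ideal.Quotient.mk M d := fun _ _ => rfl
  have hmem : ∀ (e : ↥E) (f : R), φ e f = 0 ↔ (f : ↥E → D) e ∈ M := by
    intro e f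
    rw [hφ]
    exact Ideal.Quotient.eq_zero_iff_mem
  obtain ⟨lift, hlift⟩ : ∃ l : D ⧸ M → D, ∀ x, Ideal.Quotient.mk M (l x) = x :=
    ⟨Function.surjInv Ideal.Quotient.mk_surjective, Function.surjInv_eq _⟩
  have key : ∀ f ∈ Q, ∀ g ∈ Q, ∃ h ∈ Q,
      ∀ e : ↥E, (h : ↥E → D) e ∈ M → (f : ↥E → D) e ∈ M ∧ (g : ↥E → D) e ∈ M := by
    rcases hyp with halg | hfin
    · -- non algebraically closed case
      obtain ⟨p, hmonic, hirr, hroot⟩ :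
          ∃ p : Polynomial (D ⧸ M), p.Monic ∧ Irreducible p ∧ ∀ x, p.eval x ≠ 0 := by
        by_contra hcon
        push_neg at hcon
        exact halg (IsAlgClosed.of_exists_root _ fun p hm hi => hcon p hm hi)
      set n := p.natDegree with hn
      have hnpos : 0 < n := by
        by_contra hz
        push_neg at hz
        interval_cases n
        · exact (not_irreducible_one) ((Polynomial.Monic.natDegree_eq_zero hmonic).mp hn.symm ▸ hirr)
      intro f hf g hg
      refine ⟨∑ i ∈ Finset.range (n + 1), C (lift (p.coeff i)) * f ^ i * g ^ (n - i), ?_, ?_⟩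
      · refine Ideal.sum_mem Q fun i hi => ?_
        rcases Nat.eq_zero_or_pos i with h0 | hpos
        · subst h0
          exact Q.mul_mem_left _ (Ideal.pow_mem_of_mem Q hg _ (by omega))
        · exact Ideal.mul_mem_right _ _ (Q.mul_mem_left _ (Ideal.pow_mem_of_mem Q hf _ hpos))
      · intro e he
        rw [← hmem] at he
        rw [map_sum] at he
        have hsum : ∑ i ∈ Finset.range (n + 1),
            p.coeff i * (φ e f) ^ i * (φ e g) ^ (n - i) = 0 := by
          rw [← he]
          refine Finset.sum_congr rfl fun i hi => ?_
          rw [map_mul, map_mul, map_pow, map_pow, hφC, hlift]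
        set A := φ e f with hA
        set B := φ e g with hB
        have hBzero : B = 0 := by
          by_contra hBne
          have hBn : B ^ n ≠ 0 := pow_ne_zero _ hBne
          have heval : B ^ n * p.eval (A * B⁻¹) = 0 := by
            rw [Polynomial.eval_eq_sum_range, Finset.mul_sum, ← hsum]
            refine Finset.sum_congr rfl fun i hi => ?_
            have hin : i ≤ n := Nat.lt_succ_iff.mp (Finset.mem_range.mp hi)
            rw [mul_pow, pow_sub₀ B hBne hin]
            field_simp
            ring
            rw [mul_assoc, ← mul_pow, mul_inv_cancel₀ hBne, one_pow, mul_one]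
          rcases mul_eq_zero.mp heval with h | h
          · exact hBn h
          · exact hroot _ h
        have hAzero : A = 0 := by
          rw [hBzero] at hsum
          have hsingle : ∑ i ∈ Finset.range (n + 1),
              p.coeff i * A ^ i * (0 : D ⧸ M) ^ (n - i)
              = p.coeff n * A ^ n * (0 : D ⧸ M) ^ (n - n) :=
            Finset.sum_eq_single_of_mem n (Finset.mem_range.mpr (Nat.lt_succ_self n))
              (fun i hi hne => by
                have hi' := Finset.mem_range.mp hi
                rw [zero_pow (by omega : n - i ≠ 0), mul_zero])
          rw [hsingle, Nat.sub_self, pow_zero, hmonic.coeff_natDegree, one_mul, mul_one] at hsum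
          exact (pow_eq_zero_iff (by omega)).mp hsum
        constructor
        · rw [← hmem, ← hA]; exact hAzero
        · rw [← hmem, ← hB]; exact hBzero
    · -- finite residue case
      have hu : ∀ f : R, ∃ u : R, ∀ e : ↥E,
          (φ e f = 0 → φ e u ≠ 0) ∧ (φ e f ≠ 0 → φ e u = 0) := by
        intro f
        have hT : ((Set.range fun e : ↥E => Ideal.Quotient.mk M ((f : ↥E → D) e)) \ {0}).Finite :=
          (hfin f).diff
        refine ⟨hT.toFinset.prod (fun x => f - C (lift x)), fun e => ?_⟩
        have hval : φ e (hT.toFinset.prod (fun x => f - C (lift x)))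
            = hT.toFinset.prod (fun x => φ e f - x) := by
          rw [map_prod]
          exact Finset.prod_congr rfl fun x _ => by rw [map_sub, hφC, hlift]
        constructor
        · intro h0
          rw [hval, h0]
          refine Finset.prod_ne_zero_iff.mpr fun x hx => ?_
          have hx' := hT.mem_toFinset.mp hx
          simpa using fun hxx => hx'.2 (by simp [hxx])
        · intro hne
          rw [hval]
          refine Finset.prod_eq_zero (hT.mem_toFinset.mpr ⟨⟨e, (hφ e f).symm⟩, hne⟩) ?_
          exact sub_self _
      intro f hf g hg
      obtain ⟨uf, huf⟩ := hu f
      obtain ⟨ug, hug⟩ := hu g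
      refine ⟨f * ug + g * uf + f * g, ?_, ?_⟩
      · exact Q.add_mem (Q.add_mem (Ideal.mul_mem_right _ _ hf) (Ideal.mul_mem_right _ _ hg))
          (Ideal.mul_mem_right _ _ hf)
      · intro e he
        rw [← hmem] at he
        rw [map_add, map_add, map_mul, map_mul, map_mul] at he
        rw [← hmem, ← hmem]
        by_cases hA : φ e f = 0
        · by_cases hB : φ e g = 0
          · exact ⟨hA, hB⟩
          · exfalso
            have h1 := (huf e).1 hA
            simp only [hA, (hug e).2 hB, zero_mul, mul_zero, zero_add, add_zero] at he
            exact mul_ne_zero hB h1 he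
        · by_cases hB : φ e g = 0
          · exfalso
            have h1 := (hug e).1 hB
            simp only [hB, (huf e).2 hA, zero_mul, mul_zero, zero_add, add_zero] at he
            exact mul_ne_zero hA h1 he
          · exfalso
            simp only [(huf e).2 hA, (hug e).2 hB, mul_zero, zero_add, add_zero] at he
            exact mul_ne_zero hA hB he
  -- build the filter
  let F : Filter ↥E := {
    sets := {S | ∃ h ∈ Q, {e : ↥E | (h : ↥E → D) e ∈ M} ⊆ S}
    univ_sets := ⟨0, Q.zero_mem, by intro e _; trivial⟩
    sets_of_superset := fun ⟨h, hh, hsub⟩ hST => ⟨h, hh, hsub.trans hST⟩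
    inter_sets := by
      rintro S T ⟨h1, hh1, hsub1⟩ ⟨h2, hh2, hsub2⟩
      obtain ⟨h, hh, hsub⟩ := key h1 hh1 h2 hh2
      exact ⟨h, hh, fun e he => ⟨hsub1 (hsub e he).1, hsub2 (hsub e he).2⟩⟩ }
  have hFmem : ∀ S, S ∈ F ↔ ∃ h ∈ Q, {e : ↥E | (h : ↥E → D) e ∈ M} ⊆ S := fun S => Iff.rfl
  haveI hne : F.NeBot := by
    refine Filter.neBot_iff.mpr fun hbot => ?_
    have : (∅ : Set ↥E) ∈ F := by rw [hbot]; exact Filter.mem_bot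
    obtain ⟨h, hh, hsub⟩ := (hFmem ∅).mp this
    exact hQ ⟨h, hh, fun e hem => hsub hem⟩
  refine ⟨Ultrafilter.of F, fun f => ?_⟩
  have hQle : ∀ f ∈ Q, {e : ↥E | (f : ↥E → D) e ∈ M} ∈ Ultrafilter.of F :=
    fun f hf => Ultrafilter.of_le F ((hFmem _).mpr ⟨f, hf, subset_rfl⟩)
  let Q' : Ideal R := {
    carrier := {f : R | {e : ↥E | (f : ↥E → D) e ∈ M} ∈ Ultrafilter.of F}
    zero_mem' := by
      have : {e : ↥E | ((0 : R) : ↥E → D) e ∈ M} = Set.univ := by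
        ext e; simp [M.zero_mem]
      simp only [Set.mem_setOf_eq, this]
      exact Filter.univ_mem
    add_mem' := by
      intro a b ha hb
      refine Filter.mem_of_superset (Filter.inter_mem ha hb) ?_
      rintro e ⟨h1, h2⟩
      show ((a + b : R) : ↥E → D) e ∈ M
      rw [Subring.coe_add, Pi.add_apply]
      exact M.add_mem h1 h2
    smul_mem' := by
      intro c x hx
      refine Filter.mem_of_superset hx ?_
      intro e he
      show ((c • x : R) : ↥E → D) e ∈ M
      rw [smul_eq_mul, Subring.coe_mul, Pi.mul_apply]
      exact M.mul_mem_left _ he }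
  have hQeq : Q' = Q := by
    refine hQmax Q' (fun f hf => hQle f hf) ?_
    rintro ⟨f, hf, hunit⟩
    have hfU : {e : ↥E | (f : ↥E → D) e ∈ M} ∈ Ultrafilter.of F := hf
    obtain ⟨e, he⟩ := Ultrafilter.nonempty_of_mem hfU
    exact hunit e he
  constructor
  · exact fun hf => hQle f hf
  · intro hfU
    rw [← hQeq]
    exact hfU
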